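/- For all integers 1 ≤ k ≤ i ≤ n, the partial derivative of h_i² satisfies the identity ∂(h_i²)/∂x_k = −(−2)^k · ∏_{j=0}^{k−1} h_{i,j} = −(−2)^k · h_{i,0} h_{i,1} ⋯ h_{i,k−1}, identically on ℝⁿ. -/

import Mathlib

open scoped ContDiff

noncomputable section

/-- The polynomial `h_i` in the variables `x_1, …, x_i` (0-indexed: it depends on
coordinates `0, …, i-1`): `h_0 = 0`, `h_{i+1}(x) = x 0 - (h_i (x ∘ (·+1)))^2`. -/
def hpoly : ℕ → (ℕ → ℝ) → ℝ
  | 0, _ => 0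
  | i + 1, x => x 0 - (hpoly i fun k => x (k + 1)) ^ 2

/-- Extension of a vector of `ℝⁿ` by zeros to an infinite sequence. -/
def extv {n : ℕ} (x : Fin n → ℝ) : ℕ → ℝ := fun k => if h : k < n then x ⟨k, h⟩ else 0

/-- `h_{i,j}` as a function on `ℝⁿ` (0-indexed: it depends on coordinates `j, …, i-1`;
in the paper's notation `h_{i,j}(x) = h_{i-j}(x_{j+1}, …, x_i)`). -/
def hh (n i j : ℕ) (x : Fin n → ℝ) : ℝ := hpoly (i - j) fun k => extv x (j + k)

/-- The gradient of a function on `ℝⁿ`, via the Fréchet derivative. -/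
def grad {n : ℕ} (f : (Fin n → ℝ) → ℝ) (x : Fin n → ℝ) : Fin n → ℝ :=
  fun k => fderiv ℝ f x (Pi.single k 1)

/-- The `m`-th standard basis vector of `ℝⁿ` (zero if `m ≥ n`). -/
def evec (n m : ℕ) : Fin n → ℝ := fun k => if (k : ℕ) = m then 1 else 0

/-- For all `1 ≤ k ≤ i ≤ n`, identically on `ℝⁿ`,
`∂(h_i²)/∂x_k = -(-2)^k ∏_{j=0}^{k-1} h_{i,j}`.
(0-indexed: the paper's `x_k` is coordinate `k - 1`.) -/
lemma hh_zero (n i j : ℕ) (h : i ≤ j) : hh n i j = fun _ => 0 := by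
  funext x
  unfold hh
  rw [Nat.sub_eq_zero_of_le h]
  rfl

lemma hh_eq (n i j : ℕ) (hj : j < i) (hin : i ≤ n) (x : Fin n → ℝ) :
    hh n i j x = x ⟨j, lt_of_lt_of_le hj hin⟩ - (hh n i (j+1) x) ^ 2 := by
  have hd : i - j = (i - (j+1)) + 1 := by omega
  unfold hh
  rw [hd]
  have hf : (fun m => extv x (j + (m+1))) = fun m => extv x ((j+1) + m) := by
    funext m; congr 1; omega
  show extv x (j + 0) - (hpoly _ fun m => extv x (j + (m+1))) ^ 2 = _
  rw [hf]
  have h0 : extv x (j + 0) = x ⟨j, lt_of_lt_of_le hj hin⟩ := by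
    simp only [extv, Nat.add_zero]
    rw [dif_pos (by omega)]
  exact congrArg (fun t => t - (hh n i (j+1) x)^2) h0

lemma hh_diff (n i : ℕ) (hin : i ≤ n) : ∀ d j, i - j ≤ d → Differentiable ℝ (hh n i j) := by
  intro d
  induction d with
  | zero =>
    intro j hj
    rw [hh_zero n i j (by omega)]
    exact differentiable_const 0
  | succ d ih =>
    intro j hj
    by_cases h : i ≤ j
    · rw [hh_zero n i j h]; exact differentiable_const 0
    · push_neg at h
      have : hh n i j = fun x => x ⟨j, lt_of_lt_of_le h hin⟩ - (hh n i (j+1) x) ^ 2 := by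
        funext x; exact hh_eq n i j h hin x
      rw [this]
      exact (differentiable_apply _).sub ((ih (j+1) (by omega)).pow 2)

lemma hh_fderiv (n i k : ℕ) (hk1 : 1 ≤ k) (hki : k ≤ i) (hin : i ≤ n)
    (hkn : k - 1 < n) (x : Fin n → ℝ) :
    ∀ d j, i - j ≤ d →
      fderiv ℝ (hh n i j) x (Pi.single ⟨k - 1, hkn⟩ 1)
        = if j ≤ k - 1 then (-2:ℝ)^(k-1-j) * ∏ m ∈ Finset.Ico (j+1) k, hh n i m x else 0 := by
  intro d
  induction d with
  | zero =>
    intro j hj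
    rw [hh_zero n i j (by omega), fderiv_fun_const]
    simp only [Pi.zero_apply, ContinuousLinearMap.zero_apply]
    rw [if_neg (by omega)]
  | succ d ih =>
    intro j hj
    by_cases h : i ≤ j
    · rw [hh_zero n i j h, fderiv_fun_const]
      simp only [Pi.zero_apply, ContinuousLinearMap.zero_apply]
      rw [if_neg (by omega)]
    · push_neg at h
      have hdiff := hh_diff n i hin d (j+1) (by omega)
      have hfun : hh n i j
          = fun y => y ⟨j, lt_of_lt_of_le h hin⟩ - hh n i (j+1) y * hh n i (j+1) y := by
        funext y; rw [hh_eq n i j h hin y, sq]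
      have h1 := hasFDerivAt_apply (𝕜 := ℝ) (⟨j, lt_of_lt_of_le h hin⟩ : Fin n) x
      have h2 : HasFDerivAt (hh n i (j+1)) (fderiv ℝ (hh n i (j+1)) x) x :=
        (hdiff x).hasFDerivAt
      have h4 : HasFDerivAt (fun y => y ⟨j, lt_of_lt_of_le h hin⟩ - hh n i (j+1) y * hh n i (j+1) y) _ x :=
        h1.sub (h2.mul h2)
      rw [hfun, h4.fderiv]
      simp only [ContinuousLinearMap.sub_apply, ContinuousLinearMap.add_apply,
        ContinuousLinearMap.smul_apply, ContinuousLinearMap.proj_apply, smul_eq_mul]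
      rw [ih (j+1) (by omega)]
      have hsingle : (Pi.single (⟨k - 1, hkn⟩ : Fin n) (1:ℝ) : Fin n → ℝ) ⟨j, lt_of_lt_of_le h hin⟩
          = if j = k - 1 then (1:ℝ) else 0 := by
        rw [Pi.single_apply]
        congr 1
        simp [Fin.ext_iff, eq_comm]
      rw [hsingle]
      rcases lt_trichotomy j (k-1) with hlt | heq | hgt
      · rw [if_neg (by omega), if_pos (by omega), if_pos (by omega)]
        rw [Finset.prod_eq_prod_Ico_succ_bot (show j + 1 < k by omega)]
        have hpow : (-2:ℝ)^(k-1-j) = (-2) * (-2)^(k-1-(j+1)) := by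
          rw [show k-1-j = (k-1-(j+1)) + 1 by omega, pow_succ]
          ring
        rw [hpow]
        ring
      · rw [if_pos heq, if_neg (by omega), if_pos (by omega)]
        rw [heq]
        simp [Finset.Ico_self, show k - 1 + 1 = k by omega]
      · rw [if_neg (by omega), if_neg (by omega), if_neg (by omega)]
        ring

theorem stmt_12 (n i k : ℕ) (hk1 : 1 ≤ k) (hki : k ≤ i) (hin : i ≤ n)
    (x : Fin n → ℝ) :
    fderiv ℝ (fun y => (hh n i 0 y) ^ 2) x
        (Pi.single ⟨k - 1, lt_of_lt_of_le (lt_of_lt_of_le (Nat.sub_lt hk1 Nat.one_pos) hki) hin⟩ 1)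
      = -(-2 : ℝ) ^ k * ∏ m ∈ Finset.range k, hh n i m x := by
  obtain ⟨K, rfl⟩ : ∃ K, k = K + 1 := ⟨k - 1, by omega⟩
  have hkn : K + 1 - 1 < n := by omega
  have hdiff := hh_diff n i hin i 0 (by omega)
  have h2 : HasFDerivAt (hh n i 0) (fderiv ℝ (hh n i 0) x) x := (hdiff x).hasFDerivAt
  have h3 : HasFDerivAt (fun y => hh n i 0 y * hh n i 0 y) _ x := h2.mul h2
  have hfun : (fun y => (hh n i 0 y) ^ 2) = fun y => hh n i 0 y * hh n i 0 y := by
    funext y; rw [sq]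
  rw [hfun, h3.fderiv]
  simp only [ContinuousLinearMap.add_apply, ContinuousLinearMap.smul_apply, smul_eq_mul]
  rw [hh_fderiv n i (K + 1) hk1 hki hin hkn x i 0 (by omega), if_pos (by omega)]
  have hprod : ∏ m ∈ Finset.range (K + 1), hh n i m x
      = hh n i 0 x * ∏ m ∈ Finset.Ico 1 (K + 1), hh n i m x := by
    rw [Finset.range_eq_Ico, Finset.prod_eq_prod_Ico_succ_bot (Nat.succ_pos K)]
  rw [hprod]
  simp only [Nat.add_sub_cancel, Nat.sub_zero, pow_succ]
  ring
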